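/- If u is an associative Lyndon-Shirshov word containing an ALSW subword v, say u = avb, then the standard bracketing of u satisfies [u] = [a[vc]d] for some factorization b = cd; that is, there is an occurrence of a bracketed subword [vc] in [u] whose underlying word starts with v. -/

import Mathlib

open List

/-- The lexicographic order used by Shirshov: a word is *greater* than any of its
proper extensions (`w > w ++ t` for `t ≠ []`), and otherwise words are compared
letterwise by the order on the alphabet.  `LSLt u v` means `u < v`. -/
def LSLt {X : Type*} [LinearOrder X] : List X → List X → Prop
  | _ :: _, [] => True
  | [], _ => False
  | a :: u, b :: v => a < b ∨ (a = b ∧ LSLt u v)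

/-- `u ≤ v` in the Shirshov lexicographic order. -/
def LSLe {X : Type*} [LinearOrder X] (u v : List X) : Prop := u = v ∨ LSLt u v

/-- The degree-lexicographic order: compare first by length, then lexicographically. -/
def DegLt {X : Type*} [LinearOrder X] (u v : List X) : Prop :=
  u.length < v.length ∨ (u.length = v.length ∧ LSLt u v)

/-- `≤` in the degree-lexicographic order. -/
def DegLe {X : Type*} [LinearOrder X] (u v : List X) : Prop := u = v ∨ DegLt u v

/-- An associative Lyndon–Shirshov word: a nonempty word `u` such that `vw > wv`
(lexicographically) for every factorization `u = vw` into nonempty parts. -/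
def IsALSW {X : Type*} [LinearOrder X] (u : List X) : Prop :=
  u ≠ [] ∧ ∀ v w : List X, v ≠ [] → w ≠ [] → u = v ++ w → LSLt (w ++ v) (v ++ w)

/-- The underlying associative word of a non-associative word (binary bracketing). -/
def wordOf {X : Type*} : FreeMagma X → List X
  | .of x => [x]
  | .mul a b => wordOf a ++ wordOf b

/-- `w` is the longest proper suffix of `u` which is an ALSW. -/
def LongestALSWProperSuffix {X : Type*} [LinearOrder X] (u w : List X) : Prop :=
  IsALSW w ∧ (∃ v : List X, v ≠ [] ∧ u = v ++ w) ∧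
    ∀ w' : List X, IsALSW w' → (∃ v' : List X, v' ≠ [] ∧ u = v' ++ w') →
      w'.length ≤ w.length

/-- The standard (up-to-down) bracketing of an ALSW: `[x] = x` and
`[u] = [[v][w]]` where `w` is the longest proper ALSW suffix of `u`. -/
inductive IsStdBracketing {X : Type*} [LinearOrder X] : List X → FreeMagma X → Prop
  | of (x : X) : IsStdBracketing [x] (.of x)
  | mul {v w : List X} {tv tw : FreeMagma X} :
      IsALSW (v ++ w) → LongestALSWProperSuffix (v ++ w) w →
      IsStdBracketing v tv → IsStdBracketing w tw →
      IsStdBracketing (v ++ w) (tv * tw)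

/-- A non-associative Lyndon–Shirshov word, via Shirshov's conditions:
the underlying word is an ALSW, both halves are NLSWs, and the right factor of
the left half is `≤` the right half. -/
inductive IsNLSW {X : Type*} [LinearOrder X] : FreeMagma X → Prop
  | of (x : X) : IsNLSW (.of x)
  | mul {tv tw : FreeMagma X} :
      IsNLSW tv → IsNLSW tw → IsALSW (wordOf (tv * tw)) →
      (∀ t₁ t₂ : FreeMagma X, tv = t₁ * t₂ → LSLe (wordOf t₂) (wordOf tw)) →
      IsNLSW (tv * tw)

/-- The free associative algebra `k⟨X⟩`, realized as the monoid algebra of the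
free monoid on `X`. -/
abbrev FreeAssocAlg (k X : Type*) [Field k] := MonoidAlgebra k (FreeMonoid X)

/-- The monomial of `k⟨X⟩` corresponding to a word `u ∈ X*`. -/
noncomputable def monom (k : Type*) [Field k] {X : Type*} (u : List X) : FreeAssocAlg k X :=
  MonoidAlgebra.single (FreeMonoid.ofList u) 1

/-- The coefficient of the word `u` in `f ∈ k⟨X⟩`. -/
def coeffW {k X : Type*} [Field k] (f : FreeAssocAlg k X) (u : List X) : k :=
  f.coeff (FreeMonoid.ofList u)

/-- `u` is the leading word of `f` with respect to the deg-lex order. -/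
def IsLeadingWord {k X : Type*} [Field k] [LinearOrder X]
    (f : FreeAssocAlg k X) (u : List X) : Prop :=
  coeffW f u ≠ 0 ∧ ∀ w : List X, coeffW f w ≠ 0 → w = u ∨ DegLt w u

/-- `f` is monic: its leading coefficient is `1`. -/
def IsMonic {k X : Type*} [Field k] [LinearOrder X] (f : FreeAssocAlg k X) : Prop :=
  ∃ u : List X, IsLeadingWord f u ∧ coeffW f u = 1

/-- The generator `x ∈ X` inside `k⟨X⟩`. -/
noncomputable def gen (k : Type*) [Field k] {X : Type*} (x : X) : FreeAssocAlg k X :=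
  monom k [x]

attribute [local instance 100] LieRing.ofAssociativeRing
attribute [local instance 100] LieAlgebra.ofAssociativeAlgebra

/-- The free Lie algebra `Lie(X)`: the Lie subalgebra of `k⟨X⟩` generated by `X`
under the commutator bracket. -/
noncomputable def LieX (k X : Type*) [Field k] : LieSubalgebra k (FreeAssocAlg k X) :=
  LieSubalgebra.lieSpan k _ (Set.range (gen k (X := X)))

/-- Evaluation of a non-associative word in `k⟨X⟩`, interpreting the binary
operation as the commutator `(ab) = ab - ba`. -/
noncomputable def evalC {k X : Type*} [Field k] : FreeMagma X → FreeAssocAlg k X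
  | .of x => gen k x
  | .mul a b => evalC a * evalC b - evalC b * evalC a

/-- `SubtreeAt s a d t`: `s` occurs as a (bracketed) subtree of `t`, with the word
`a` to its left and the word `d` to its right. -/
inductive SubtreeAt {X : Type*} : FreeMagma X → List X → List X → FreeMagma X → Prop
  | refl (t : FreeMagma X) : SubtreeAt t [] [] t
  | left {s : FreeMagma X} {a d : List X} {t₁ : FreeMagma X} (t₂ : FreeMagma X) :
      SubtreeAt s a d t₁ → SubtreeAt s a (d ++ wordOf t₂) (t₁ * t₂)
  | right {s : FreeMagma X} {a d : List X} {t₂ : FreeMagma X} (t₁ : FreeMagma X) :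
      SubtreeAt s a d t₂ → SubtreeAt s (wordOf t₁ ++ a) d (t₁ * t₂)

/-- `ReplaceAt s s' a d t t'`: `t'` is obtained from `t` by replacing the subtree
`s`, occurring at position `(a, d)`, by `s'`. -/
inductive ReplaceAt {X : Type*} (s s' : FreeMagma X) :
    List X → List X → FreeMagma X → FreeMagma X → Prop
  | refl : ReplaceAt s s' [] [] s s'
  | left {a d : List X} {t₁ t₁' : FreeMagma X} (t₂ : FreeMagma X) :
      ReplaceAt s s' a d t₁ t₁' → ReplaceAt s s' a (d ++ wordOf t₂) (t₁ * t₂) (t₁' * t₂)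
  | right {a d : List X} {t₂ t₂' : FreeMagma X} (t₁ : FreeMagma X) :
      ReplaceAt s s' a d t₂ t₂' →
      ReplaceAt s s' (wordOf t₁ ++ a) d (t₁ * t₂) (t₁ * t₂')

/-- The left-normed product `[[[t₀ t₁] t₂] ⋯ tₙ]`. -/
def leftComb {X : Type*} (t₀ : FreeMagma X) (ts : List (FreeMagma X)) : FreeMagma X :=
  ts.foldl (· * ·) t₀

/-- `cs` is the non-decreasing Lyndon factorization of `c`. -/
def LyndonFactorization {X : Type*} [LinearOrder X] (c : List X) (cs : List (List X)) : Prop :=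
  c = cs.flatten ∧ (∀ w ∈ cs, IsALSW w) ∧ cs.Chain' LSLe

/-- `EvalSub k f s a d t h`: evaluating the bracketing `t` in `k⟨X⟩` (via
commutators), except that its subtree `s` at position `(a, d)` is replaced by the
polynomial `f`, gives the value `h`. -/
inductive EvalSub (k : Type*) [Field k] {X : Type*} [LinearOrder X] (f : FreeAssocAlg k X) :
    FreeMagma X → List X → List X → FreeMagma X → FreeAssocAlg k X → Prop
  | refl (s : FreeMagma X) : EvalSub k f s [] [] s f
  | left {s : FreeMagma X} {a d : List X} {t₁ : FreeMagma X} {h : FreeAssocAlg k X}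
      (t₂ : FreeMagma X) : EvalSub k f s a d t₁ h →
      EvalSub k f s a (d ++ wordOf t₂) (t₁ * t₂) (h * evalC t₂ - evalC t₂ * h)
  | right {s : FreeMagma X} {a d : List X} {t₂ : FreeMagma X} {h : FreeAssocAlg k X}
      (t₁ : FreeMagma X) : EvalSub k f s a d t₂ h →
      EvalSub k f s (wordOf t₁ ++ a) d (t₁ * t₂) (evalC t₁ * h - h * evalC t₁)

/-- `IsNormalSWord f fbar a b h`: `h` is the normal `S`-word `[afb]_{f̄}`, i.e. the
result of taking the relative (Shirshov special) bracketing `[a f̄ b]_{f̄}` and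
substituting the polynomial `f` for the subtree `[f̄]`. -/
def IsNormalSWord {k X : Type*} [Field k] [LinearOrder X]
    (f : FreeAssocAlg k X) (fbar a b : List X) (h : FreeAssocAlg k X) : Prop :=
  ∃ (c d : List X) (t s tv t' : FreeMagma X) (cs : List (List X)) (tcs : List (FreeMagma X)),
    b = c ++ d ∧
    IsStdBracketing (a ++ fbar ++ b) t ∧
    SubtreeAt s a d t ∧ wordOf s = fbar ++ c ∧
    IsStdBracketing fbar tv ∧
    LyndonFactorization c cs ∧
    List.Forall₂ IsStdBracketing cs tcs ∧
    ReplaceAt s (leftComb tv tcs) a d t t' ∧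
    EvalSub k f tv a (c ++ d) t' h

section ShirshovHelpers

variable {X : Type*} [LinearOrder X]

@[simp] lemma wordOf_mul (s t : FreeMagma X) : wordOf (s * t) = wordOf s ++ wordOf t := rfl

lemma wordOf_std {u : List X} {t : FreeMagma X} (h : IsStdBracketing u t) :
    wordOf t = u := by
  induction h with
  | of x => rfl
  | mul _ _ _ _ ih1 ih2 => rw [wordOf_mul, ih1, ih2]

lemma lslt_nil (v : List X) : ¬ LSLt [] v := by cases v <;> simp [LSLt]

@[simp] lemma lslt_cons_nil (a : X) (u : List X) : LSLt (a :: u) [] := by simp [LSLt]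

@[simp] lemma lslt_cons_cons {a b : X} {u v : List X} :
    LSLt (a :: u) (b :: v) ↔ a < b ∨ (a = b ∧ LSLt u v) := by simp [LSLt]

inductive LetterLt : List X → List X → Prop
  | head {a b : X} (u v : List X) : a < b → LetterLt (a :: u) (b :: v)
  | cons {a : X} {u v : List X} : LetterLt u v → LetterLt (a :: u) (a :: v)

lemma LetterLt.append {u v : List X} (h : LetterLt u v) (x y : List X) :
    LetterLt (u ++ x) (v ++ y) := by
  induction h with
  | head u v hab => exact .head _ _ hab
  | cons _ ih => exact .cons ih

lemma LetterLt.lslt {u v : List X} (h : LetterLt u v) : LSLt u v := by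
  induction h with
  | head u v hab => exact lslt_cons_cons.2 (Or.inl hab)
  | cons _ ih => exact lslt_cons_cons.2 (Or.inr ⟨rfl, ih⟩)

lemma lslt_append_nonnil {v t : List X} (ht : t ≠ []) : LSLt (v ++ t) v := by
  induction v with
  | nil =>
    cases t with
    | nil => exact absurd rfl ht
    | cons a t => simp [LSLt]
  | cons a v ih => exact lslt_cons_cons.2 (Or.inr ⟨rfl, ih⟩)

lemma lslt_cases {u v : List X} (h : LSLt u v) :
    LetterLt u v ∨ ∃ t, t ≠ [] ∧ u = v ++ t := by
  induction u generalizing v with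
  | nil => exact absurd h (lslt_nil v)
  | cons a u ih =>
    cases v with
    | nil => exact Or.inr ⟨a :: u, by simp, rfl⟩
    | cons b v =>
      rcases lslt_cons_cons.1 h with hab | ⟨rfl, h'⟩
      · exact Or.inl (.head _ _ hab)
      · rcases ih h' with hl | ⟨t, ht, rfl⟩
        · exact Or.inl (.cons hl)
        · exact Or.inr ⟨t, ht, rfl⟩

lemma lslt_asymm {u v : List X} (h1 : LSLt u v) (h2 : LSLt v u) : False := by
  induction u generalizing v with
  | nil => exact lslt_nil v h1
  | cons a u ih =>
    cases v with
    | nil => exact lslt_nil _ h2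
    | cons b v =>
      rcases lslt_cons_cons.1 h1 with hab | ⟨rfl, h1'⟩
      · rcases lslt_cons_cons.1 h2 with hba | ⟨hba, _⟩
        · exact absurd hba (not_lt.2 hab.le)
        · exact absurd hab (by simp [hba])
      · rcases lslt_cons_cons.1 h2 with hba | ⟨_, h2'⟩
        · exact absurd hba (lt_irrefl a)
        · exact ih h1' h2'

lemma lslt_trichotomy (u v : List X) : LSLt u v ∨ u = v ∨ LSLt v u := by
  induction u generalizing v with
  | nil =>
    cases v with
    | nil => exact Or.inr (Or.inl rfl)
    | cons b v => exact Or.inr (Or.inr (by simp [LSLt]))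
  | cons a u ih =>
    cases v with
    | nil => exact Or.inl (by simp [LSLt])
    | cons b v =>
      rcases lt_trichotomy a b with h | rfl | h
      · exact Or.inl (lslt_cons_cons.2 (Or.inl h))
      · rcases ih v with h | rfl | h
        · exact Or.inl (lslt_cons_cons.2 (Or.inr ⟨rfl, h⟩))
        · exact Or.inr (Or.inl rfl)
        · exact Or.inr (Or.inr (lslt_cons_cons.2 (Or.inr ⟨rfl, h⟩)))
      · exact Or.inr (Or.inr (lslt_cons_cons.2 (Or.inl h)))

lemma lslt_trans {u v w : List X} (h1 : LSLt u v) (h2 : LSLt v w) : LSLt u w := by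
  induction u generalizing v w with
  | nil => exact absurd h1 (lslt_nil v)
  | cons a u ih =>
    cases v with
    | nil => exact absurd h2 (lslt_nil w)
    | cons b v =>
      cases w with
      | nil => simp [LSLt]
      | cons c w =>
        rcases lslt_cons_cons.1 h1 with hab | ⟨rfl, h1'⟩
        · rcases lslt_cons_cons.1 h2 with hbc | ⟨rfl, h2'⟩
          · exact lslt_cons_cons.2 (Or.inl (hab.trans hbc))
          · exact lslt_cons_cons.2 (Or.inl hab)
        · rcases lslt_cons_cons.1 h2 with hbc | ⟨rfl, h2'⟩
          · exact lslt_cons_cons.2 (Or.inl hbc)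
          · exact lslt_cons_cons.2 (Or.inr ⟨rfl, ih h1' h2'⟩)

lemma lslt_append_left {q p r : List X} (h : LSLt (q ++ p) (q ++ r)) : LSLt p r := by
  induction q with
  | nil => exact h
  | cons a q ih =>
    rcases lslt_cons_cons.1 h with h' | ⟨_, h'⟩
    · exact absurd h' (lt_irrefl a)
    · exact ih h'

lemma lslt_append_same_length {p r q s : List X} (hlen : p.length = r.length)
    (h : LSLt (p ++ q) (r ++ s)) : LetterLt p r ∨ (p = r ∧ LSLt q s) := by
  induction p generalizing r with
  | nil =>
    cases r with
    | nil => exact Or.inr ⟨rfl, h⟩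
    | cons b r => simp at hlen
  | cons a p ih =>
    cases r with
    | nil => simp at hlen
    | cons b r =>
      rcases lslt_cons_cons.1 h with hab | ⟨rfl, h'⟩
      · exact Or.inl (.head _ _ hab)
      · rcases ih (by simpa using hlen) h' with hl | ⟨rfl, h''⟩
        · exact Or.inl (.cons hl)
        · exact Or.inr ⟨rfl, h''⟩

/-- Shirshov: a proper nonempty suffix of an ALSW is smaller than the word. -/
lemma lslt_of_suffix {p q : List X} (h : IsALSW (p ++ q)) (hp : p ≠ []) (hq : q ≠ []) :
    LSLt q (p ++ q) := by
  rcases lslt_trichotomy q (p ++ q) with h1 | h1 | h1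
  · exact h1
  · exfalso
    have hl := congrArg List.length h1
    simp only [List.length_append] at hl
    exact hp (List.length_eq_zero_iff.1 (by omega))
  · rcases lslt_cases h1 with hl | ⟨t, ht, hte⟩
    · exfalso
      have h2 := h.2 p q hp hq rfl
      have h3 : LSLt ((p ++ q) ++ []) (q ++ p) := (hl.append [] p).lslt
      rw [List.append_nil] at h3
      exact lslt_asymm h3 h2
    · have h2 := h.2 p q hp hq rfl
      have h3 := h.2 q t hq ht hte
      have h4 : LSLt p t := lslt_append_left (hte ▸ h2)
      have h5 : LSLt (t ++ q) (p ++ q) := hte.symm ▸ h3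
      have hlen : t.length = p.length := by
        have := congrArg List.length hte
        simp only [List.length_append] at this
        omega
      rcases lslt_append_same_length hlen h5 with hl | ⟨hpt, _⟩
      · exact absurd h4 (fun h4 => lslt_asymm hl.lslt h4)
      · exact absurd (hpt ▸ h4) (fun hh => lslt_asymm hh hh)

lemma exists_max_suffix (u : List X) (hu : u ≠ []) :
    ∃ m, m ≠ [] ∧ m <:+ u ∧ ∀ s, s ≠ [] → s <:+ u → LSLe s m := by
  induction u with
  | nil => exact absurd rfl hu
  | cons x u ih =>
    by_cases hu' : u = []
    · subst hu'
      refine ⟨[x], by simp, List.suffix_rfl, fun s hs hsf => ?_⟩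
      rcases List.suffix_cons_iff.1 hsf with rfl | hsf'
      · exact Or.inl rfl
      · exact absurd (List.suffix_nil.1 hsf') hs
    · obtain ⟨m, hm, hsuf, hmax⟩ := ih hu'
      rcases lslt_trichotomy (x :: u) m with h | h | h
      · refine ⟨m, hm, hsuf.trans (List.suffix_cons x u), fun s hs hsf => ?_⟩
        rcases List.suffix_cons_iff.1 hsf with rfl | hsf'
        · exact Or.inr h
        · exact hmax s hs hsf'
      · exfalso
        have h1 := hsuf.length_le
        have h2 := congrArg List.length h
        simp only [List.length_cons] at h2
        omega
      · refine ⟨x :: u, by simp, List.suffix_rfl, fun s hs hsf => ?_⟩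
        rcases List.suffix_cons_iff.1 hsf with rfl | hsf'
        · exact Or.inl rfl
        · rcases hmax s hs hsf' with rfl | h2
          · exact Or.inr h
          · exact Or.inr (lslt_trans h2 h)

lemma max_suffix_isALSW {u0 m : List X} (hm : m ≠ []) (hsuf : m <:+ u0)
    (hmax : ∀ s, s ≠ [] → s <:+ u0 → LSLe s m) : IsALSW m := by
  refine ⟨hm, fun p q hp hq heq => ?_⟩
  have hqm : q <:+ m := heq ▸ List.suffix_append p q
  have hq0 : q <:+ u0 := hqm.trans hsuf
  rcases hmax q hq hq0 with hqe | hlt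
  · exfalso
    have := congrArg List.length (hqe ▸ heq : m = p ++ m)
    simp only [List.length_append] at this
    exact hp (List.length_eq_zero_iff.1 (by omega))
  · rcases lslt_cases hlt with hl | ⟨t, ht, hte⟩
    · have h3 := (hl.append p []).lslt
      rw [List.append_nil] at h3
      exact heq ▸ h3
    · exfalso
      have h1 := congrArg List.length heq
      have h2 := congrArg List.length hte
      simp only [List.length_append] at h1 h2
      exact hp (List.length_eq_zero_iff.1 (by omega))

lemma suffix_of_suffix_length_le' {l₁ l₂ l : List X} (h1 : l₁ <:+ l) (h2 : l₂ <:+ l)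
    (hl : l₁.length ≤ l₂.length) : l₁ <:+ l₂ := by
  obtain ⟨p1, rfl⟩ := h1
  obtain ⟨p2, hp2⟩ := h2
  rcases List.append_eq_append_iff.1 hp2.symm with ⟨a', ha1, ha2⟩ | ⟨c', hc1, hc2⟩
  · have ha : a' = [] := by
      have := congrArg List.length ha2
      simp only [List.length_append] at this
      exact List.length_eq_zero_iff.1 (by omega)
    subst ha
    simp only [List.nil_append] at ha2
    exact ha2 ▸ List.suffix_rfl
  · exact ⟨c', hc2.symm⟩

/-- The key impossibility: an ALSW subword cannot straddle the standard
factorization boundary when it starts strictly inside the left factor. -/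
lemma key_no_straddle {v v₁ w a v' v'' b : List X}
    (hvA : IsALSW v) (hL : LongestALSWProperSuffix (v₁ ++ w) w)
    (ha : a ≠ []) (hv' : v' ≠ []) (hv'' : v'' ≠ [])
    (hv₁ : v₁ = a ++ v') (hv : v = v' ++ v'') (hw : w = v'' ++ b) : False := by
  obtain ⟨hwA, -, hlong⟩ := hL
  have hwne : w ≠ [] := hwA.1
  have hS : LSLt v'' v := by rw [hv]; exact lslt_of_suffix (hv ▸ hvA) hv' hv''
  have hLL : LetterLt v'' v := by
    rcases lslt_cases hS with hl | ⟨t, ht, hte⟩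
    · exact hl
    · exfalso
      have h1 := congrArg List.length hte
      have h2 := congrArg List.length hv
      simp only [List.length_append] at h1 h2
      have hv'len : 0 < v'.length := List.length_pos_iff.2 hv'
      have htlen : 0 < t.length := List.length_pos_iff.2 ht
      omega
  have hlt : LSLt w (v' ++ w) := by
    have h3 := (hLL.append b b).lslt
    rw [← hw, hv, List.append_assoc, ← hw] at h3
    exact h3
  obtain ⟨x, a', rfl⟩ : ∃ x a', a = x :: a' := by
    cases a with
    | nil => exact absurd rfl ha
    | cons x a' => exact ⟨x, a', rfl⟩
  have hxu : v₁ ++ w = x :: (a' ++ (v' ++ w)) := by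
    rw [hv₁]; simp
  have hu0ne : a' ++ (v' ++ w) ≠ [] := by simp [hwne]
  obtain ⟨m, hm, hmsuf, hmax⟩ := exists_max_suffix (a' ++ (v' ++ w)) hu0ne
  have hmA : IsALSW m := max_suffix_isALSW hm hmsuf hmax
  have hs0 : (v' ++ w) <:+ a' ++ (v' ++ w) := List.suffix_append a' (v' ++ w)
  have hwm : LSLt w m := by
    rcases hmax (v' ++ w) (by simp [hwne]) hs0 with heqm | hltm
    · exact heqm ▸ hlt
    · exact lslt_trans hlt hltm
  obtain ⟨r, hr⟩ := hmsuf
  have hum : v₁ ++ w = (x :: r) ++ m := by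
    rw [hxu, ← hr]; rfl
  have hmlen : m.length ≤ w.length := hlong m hmA ⟨x :: r, by simp, hum⟩
  have hww : w <:+ a' ++ (v' ++ w) := (List.suffix_append v' w).trans hs0
  have hmw : m <:+ w := suffix_of_suffix_length_le' ⟨r, hr⟩ hww hmlen
  have hmne : m ≠ w := fun h => lslt_asymm (h ▸ hwm) (h ▸ hwm)
  obtain ⟨pm, hpm⟩ := hmw
  have hpmne : pm ≠ [] := by
    rintro rfl
    simp only [List.nil_append] at hpm
    exact hmne hpm
  have hfin : LSLt m (pm ++ m) := lslt_of_suffix (hpm.symm ▸ hwA) hpmne hm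
  rw [hpm] at hfin
  exact lslt_asymm hwm hfin

lemma std_subword {u : List X} {t : FreeMagma X} (ht : IsStdBracketing u t) :
    ∀ a v b : List X, IsALSW v → u = a ++ v ++ b →
      ∃ c d s, b = c ++ d ∧ SubtreeAt s a d t ∧ wordOf s = v ++ c := by
  induction ht with
  | of x =>
    intro a v b hv he
    have hv1 : 0 < v.length := List.length_pos_iff.2 hv.1
    have hlen := congrArg List.length he
    simp only [List.length_append, List.length_cons, List.length_nil] at hlen
    have ha : a = [] := List.length_eq_zero_iff.1 (by omega)
    have hb : b = [] := List.length_eq_zero_iff.1 (by omega)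
    subst ha hb
    simp only [List.nil_append, List.append_nil] at he
    exact ⟨[], [], .of x, rfl, .refl _, by simp [wordOf, ← he]⟩
  | mul hA hL hb1 hb2 ih1 ih2 =>
    rename_i v₁ w tv tw
    intro a v b hv he
    by_cases ha : a = []
    · subst ha
      simp only [List.nil_append] at he
      exact ⟨b, [], tv * tw, by simp, .refl _, by
        rw [wordOf_mul, wordOf_std hb1, wordOf_std hb2, he]⟩
    · rw [List.append_assoc] at he
      rcases List.append_eq_append_iff.1 he.symm with ⟨a', h1, h2⟩ | ⟨c', h1, h2⟩
      · rcases List.append_eq_append_iff.1 h2 with ⟨x2, hx1, hx2⟩ | ⟨y, hy1, hy2⟩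
        · obtain ⟨c, d1, s, hcd, hsub, hws⟩ :=
            ih1 a v x2 hv (by rw [h1, hx1, List.append_assoc])
          refine ⟨c, d1 ++ w, s, by rw [hx2, hcd, List.append_assoc], ?_, hws⟩
          have h5 := SubtreeAt.left tw hsub
          rwa [wordOf_std hb2] at h5
        · by_cases ha' : a' = []
          · subst ha'
            simp only [List.append_nil] at h1
            simp only [List.nil_append] at hy1
            obtain ⟨c, d, s, hcd, hsub, hws⟩ := ih2 [] v b hv (by simpa [hy1] using hy2)
            refine ⟨c, d, s, hcd, ?_, hws⟩
            have h5 := SubtreeAt.right tv hsub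
            rwa [wordOf_std hb1, List.append_nil, h1] at h5
          · by_cases hy : y = []
            · subst hy
              simp only [List.append_nil] at hy1
              simp only [List.nil_append] at hy2
              obtain ⟨c, d1, s, hcd, hsub, hws⟩ :=
                ih1 a v [] hv (by rw [h1, hy1]; simp)
              have hc : c = [] := (List.append_eq_nil_iff.1 hcd.symm).1
              have hd : d1 = [] := (List.append_eq_nil_iff.1 hcd.symm).2
              subst hc hd
              refine ⟨[], w, s, by simp [hy2], ?_, hws⟩
              have h5 := SubtreeAt.left tw hsub
              rwa [wordOf_std hb2, List.nil_append] at h5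
            · exact (key_no_straddle hv hL ha ha' hy h1 hy1 hy2).elim
      · obtain ⟨c, d, s, hcd, hsub, hws⟩ :=
          ih2 c' v b hv (by rw [h2, List.append_assoc])
        refine ⟨c, d, s, hcd, ?_, hws⟩
        have h5 := SubtreeAt.right tv hsub
        rwa [wordOf_std hb1, ← h1] at h5

end ShirshovHelpers

/-- Shirshov's special bracketing lemma, part (i).
If `u = avb` is an ALSW containing an ALSW subword `v`, then the standard
bracketing of `u` satisfies `[u] = [a[vc]d]` for some factorization `b = cd`:
there is a bracketed subtree of `[u]` whose underlying word is `vc`, occurring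
immediately after the prefix `a`. -/
theorem shirshov_special_bracketing_i {k X : Type*} [Field k] [LinearOrder X]
    (a v b : List X) (hu : IsALSW (a ++ v ++ b)) (hv : IsALSW v)
    (t : FreeMagma X) (ht : IsStdBracketing (a ++ v ++ b) t) :
    ∃ (c d : List X) (s : FreeMagma X),
      b = c ++ d ∧ SubtreeAt s a d t ∧ wordOf s = v ++ c := by
  exact std_subword ht a v b hv rfl
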